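/- arXiv:0802.0130 — 2 statements merged into one kernel-verified Lean document; each statement's English description precedes it below -/
import Mathlib

section
/- Let n ≥ 1 and 0 ≤ m ≤ n-1. For the 2n-dimensional Euler–Lagrange error system ėₖ = eₖ₊₁ (1 ≤ k ≤ n-1), ėₙ = -(1/2)λₙ - a·tᵐ/m!, λ̇₁ = -2e₁, λ̇ₖ = -λₖ₋₁ (2 ≤ k ≤ n), there exists a solution in which e₁ ≡ 0 and all eₖ ≡ 0; i.e., an n-th order smoother tracks a polynomial input of degree up to n-1 beyond the model order with zero steady-state error. -/
private lemma auxG (m : ℕ) (a : ℝ) (j : ℕ) (t : ℝ) :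
    HasDerivAt (fun t : ℝ => if j ≤ m then (-1:ℝ)^j * (-2*a) * t^(m-j) / (m-j).factorial else 0)
      (-(if j+1 ≤ m then (-1:ℝ)^(j+1) * (-2*a) * t^(m-(j+1)) / (m-(j+1)).factorial else 0)) t := by
  by_cases hj : j ≤ m
  · rcases eq_or_lt_of_le hj with h | h
    · -- j = m : constant function
      have h1 : ¬ (j + 1 ≤ m) := by omega
      simp only [hj, if_pos, h1, if_neg, not_false_iff, ← h, Nat.sub_self, pow_zero,
        Nat.factorial_zero, neg_zero]
      simpa using hasDerivAt_const t ((-1:ℝ)^j * (-2*a) * 1 / 1)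
    · -- j < m
      have h1 : j + 1 ≤ m := h
      simp only [hj, if_pos, h1]
      obtain ⟨p, hp⟩ : ∃ p, m - j = p + 1 := ⟨m - j - 1, by omega⟩
      have h2 : m - (j+1) = p := by omega
      have hd : HasDerivAt (fun t : ℝ => (-1:ℝ)^j * (-2*a) * t^(m-j) / (m-j).factorial)
          ((-1:ℝ)^j * (-2*a) * (((m-j : ℕ) : ℝ) * t^(m-j-1)) / (m-j).factorial) t :=
        ((hasDerivAt_pow (m-j) t).const_mul ((-1:ℝ)^j * (-2*a))).div_const _
      convert hd using 1
      rw [h2, hp, pow_succ, Nat.factorial_succ]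
      have hne : ((p).factorial : ℝ) ≠ 0 := Nat.cast_ne_zero.mpr (Nat.factorial_ne_zero _)
      push_cast
      field_simp
  · have h1 : ¬ (j + 1 ≤ m) := by omega
    simp only [hj, if_neg, h1, not_false_iff, neg_zero]
    exact hasDerivAt_const t 0

/-- for 1 ≤ n and m ≤ n - 1, the 2n-dimensional EL error system
admits a solution with all eₖ ≡ 0 (zero steady-state error). -/
theorem stmt3 (n m : ℕ) (hn : 1 ≤ n) (hm : m ≤ n - 1) (a : ℝ) :
    ∃ e lam : ℕ → ℝ → ℝ,
      (∀ k, 1 ≤ k → k ≤ n - 1 → ∀ t : ℝ, HasDerivAt (e k) (e (k+1) t) t) ∧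
      (∀ t : ℝ, HasDerivAt (e n) (-(1/2) * lam n t - a * t^m / (Nat.factorial m)) t) ∧
      (∀ t : ℝ, HasDerivAt (lam 1) (-2 * e 1 t) t) ∧
      (∀ k, 2 ≤ k → k ≤ n → ∀ t : ℝ, HasDerivAt (lam k) (-(lam (k-1) t)) t) ∧
      (∀ k, 1 ≤ k → k ≤ n → ∀ t : ℝ, e k t = 0) := by
  refine ⟨fun _ _ => 0,
    fun k t => if n - k ≤ m then (-1:ℝ)^(n-k) * (-2*a) * t^(m-(n-k)) / (m-(n-k)).factorial else 0,
    ?_, ?_, ?_, ?_, ?_⟩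
  · intro k _ _ t; simpa using hasDerivAt_const t (0:ℝ)
  · intro t
    have h0 : n - n = 0 := Nat.sub_self n
    have : HasDerivAt (fun _ : ℝ => (0:ℝ)) 0 t := hasDerivAt_const t 0
    convert this using 1
    simp only [h0, Nat.zero_le, if_pos, pow_zero, Nat.sub_zero]
    field_simp
    ring
  · intro t
    have := auxG m a (n-1) t
    have hn1 : n - 1 + 1 = n := by omega
    have hnm : ¬ (n ≤ m) := by omega
    rw [hn1, if_neg hnm, neg_zero] at this
    simpa using this
  · intro k hk2 hkn t
    have := auxG m a (n-k) t
    have h1 : n - (k-1) = n - k + 1 := by omega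
    simpa only [h1] using this
  · intro k _ _ t; rfl
end

section
/- Let n ≥ 1 and m > n with a ≠ 0. For the Euler–Lagrange error system ėₖ = eₖ₊₁ (1 ≤ k ≤ n-1), ėₙ = -(1/2)λₙ - a·tᵐ/m!, λ̇₁ = -2e₁, λ̇ₖ = -λₖ₋₁ (2 ≤ k ≤ n), there is no solution in which all eₖ are constant. -/
/-- with m > n and a ≠ 0, the EL error system has no solution in
which all the eₖ are constant on [0,∞). -/
theorem stmt5 (n m : ℕ) (hn : 1 ≤ n) (hm : n < m) (a : ℝ) (ha : a ≠ 0)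
    (e lam : ℕ → ℝ → ℝ)
    (hchain : ∀ k, 1 ≤ k → k ≤ n - 1 → ∀ t : ℝ, 0 ≤ t → HasDerivAt (e k) (e (k+1) t) t)
    (hen : ∀ t : ℝ, 0 ≤ t →
      HasDerivAt (e n) (-(1/2) * lam n t - a * t^m / (Nat.factorial m)) t)
    (hl1 : ∀ t : ℝ, 0 ≤ t → HasDerivAt (lam 1) (-2 * e 1 t) t)
    (hlk : ∀ k, 2 ≤ k → k ≤ n → ∀ t : ℝ, 0 ≤ t → HasDerivAt (lam k) (-(lam (k-1) t)) t) :
    ¬ (∀ k, 1 ≤ k → k ≤ n → ∀ t s : ℝ, 0 ≤ t → 0 ≤ s → e k t = e k s) := by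
  intro hconst
  have hfac : ((Nat.factorial m : ℝ)) ≠ 0 := Nat.cast_ne_zero.mpr (Nat.factorial_ne_zero m)
  have hen0 : ∀ t : ℝ, 0 < t → -(1/2) * lam n t - a * t^m / (Nat.factorial m) = 0 := by
    intro t ht
    have heq : e n =ᶠ[nhds t] fun _ => e n 1 := by
      filter_upwards [isOpen_Ioi.mem_nhds ht] with s hs
      exact hconst n hn le_rfl s 1 (le_of_lt hs) zero_le_one
    have h0 : HasDerivAt (e n) 0 t :=
      (hasDerivAt_const t (e n 1)).congr_of_eventuallyEq heq
    exact (hen t ht.le).unique h0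
  have key : ∀ j : ℕ, j ≤ n - 1 →
      ∃ c : ℝ, c ≠ 0 ∧ ∀ t : ℝ, 0 < t → lam (n - j) t = c * t ^ (m - j) := by
    intro j hj
    induction j with
    | zero =>
      refine ⟨-2 * a / (Nat.factorial m), ?_, ?_⟩
      · exact div_ne_zero (mul_ne_zero (by norm_num) ha) hfac
      · intro t ht
        have h := hen0 t ht
        simp only [Nat.sub_zero]
        field_simp at h ⊢
        linarith
    | succ j ih =>
      have hjn : j ≤ n - 1 := Nat.le_of_succ_le hj
      obtain ⟨c, hc, hcl⟩ := ih hjn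
      have hk2 : 2 ≤ n - j := by omega
      have hkn : n - j ≤ n := Nat.sub_le n j
      refine ⟨-(c * ((m - j : ℕ) : ℝ)), ?_, ?_⟩
      · exact neg_ne_zero.mpr (mul_ne_zero hc (Nat.cast_ne_zero.mpr (by omega)))
      · intro t ht
        have heq : lam (n - j) =ᶠ[nhds t] fun s => c * s ^ (m - j) := by
          filter_upwards [isOpen_Ioi.mem_nhds ht] with s hs
          exact hcl s hs
        have h1 : HasDerivAt (lam (n - j)) (c * (((m - j : ℕ) : ℝ) * t ^ (m - j - 1))) t :=
          ((hasDerivAt_pow (m - j) t).const_mul c).congr_of_eventuallyEq heq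
        have h2 := hlk (n - j) hk2 hkn t ht.le
        have huniq := h2.unique h1
        have hnj : n - j - 1 = n - (j + 1) := by omega
        have hmj : m - j - 1 = m - (j + 1) := by omega
        rw [hnj, hmj] at huniq
        linarith [huniq]
  obtain ⟨c, hc, hcl⟩ := key (n - 1) le_rfl
  have hn1 : n - (n - 1) = 1 := by omega
  rw [hn1] at hcl
  set p := m - (n - 1) with hp
  have hp1 : 1 ≤ p - 1 := by omega
  have derivEq : ∀ t : ℝ, 0 < t → -2 * e 1 t = c * (((p : ℕ) : ℝ) * t ^ (p - 1)) := by
    intro t ht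
    have heq : lam 1 =ᶠ[nhds t] fun s => c * s ^ p := by
      filter_upwards [isOpen_Ioi.mem_nhds ht] with s hs
      exact hcl s hs
    have h1 : HasDerivAt (lam 1) (c * (((p : ℕ) : ℝ) * t ^ (p - 1))) t :=
      ((hasDerivAt_pow p t).const_mul c).congr_of_eventuallyEq heq
    exact (hl1 t ht.le).unique h1
  have h1' := derivEq 1 one_pos
  have h2' := derivEq 2 two_pos
  have he : e 1 1 = e 1 2 := hconst 1 le_rfl hn 1 2 zero_le_one (by norm_num)
  have hcp : c * ((p : ℕ) : ℝ) ≠ 0 := mul_ne_zero hc (Nat.cast_ne_zero.mpr (by omega))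
  have hpow : (2:ℝ) ^ 1 ≤ 2 ^ (p - 1) := pow_le_pow_right₀ (by norm_num) hp1
  have heq2 : c * ((p : ℕ) : ℝ) * 1 = c * ((p : ℕ) : ℝ) * 2 ^ (p - 1) := by
    rw [he] at h1'
    simp only [one_pow] at h1'
    nlinarith [h1', h2']
  have h21 : (1:ℝ) = 2 ^ (p - 1) := mul_left_cancel₀ hcp heq2
  norm_num at hpow
  linarith
end
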